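/- Assume n ≥ 2 and let (Mᵢ, φ_{ij}) be descent data over (S,(Sᵢ)). Let F ⊆ ∏_{i=1}^{n-1} Sᵢ be the subring of compatible tuples (an S-algebra via s ↦ (qᵢ(s))_{i<n}), and let M' = {(mᵢ)_{i<n} ∈ ∏_{i<n} Mᵢ : for all i ≠ j < n, φ_{ij}(mᵢ mod IⱼMᵢ) = mⱼ mod IᵢMⱼ} be the fiber product module of the first n−1 pieces of the data. Then there is an S-linear isomorphism Mₙ ⊗_S F ≅ M'/(IₙM'). -/

import Mathlib

set_option maxHeartbeats 1000000
set_option synthInstance.maxHeartbeats 400000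

open MvPolynomial TensorProduct

/-- The principal ideal `(x₁ ⋯ xₙ)` in `k[x₁,…,xₙ]`. -/
noncomputable abbrev sncIdeal (k : Type) [Field k] (n : ℕ) : Ideal (MvPolynomial (Fin n) k) :=
  Ideal.span {∏ i : Fin n, (X i : MvPolynomial (Fin n) k)}

/-- The simple normal crossings model `R = k[x₁,…,xₙ]/(x₁⋯xₙ)`. -/
abbrev SNCModel (k : Type) [Field k] (n : ℕ) : Type :=
  MvPolynomial (Fin n) k ⧸ sncIdeal k n

/-- For an algebra `S` over the simple normal crossings model, the ideal `Iᵢ ⊆ S`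
generated by the image of `xᵢ`. -/
def xIdeal (k : Type) [Field k] (n : ℕ) (S : Type) [CommRing S]
    [Algebra (SNCModel k n) S] (i : Fin n) : Ideal S :=
  Ideal.span {algebraMap (SNCModel k n) S (Ideal.Quotient.mk (sncIdeal k n) (X i))}

/-- The natural map `M ⧸ p → M ⧸ q` for submodules `p ≤ q`. -/
def qfactor {S : Type*} [CommRing S] {M : Type*} [AddCommGroup M] [Module S M]
    {p q : Submodule S M} (h : p ≤ q) : (M ⧸ p) →ₗ[S] M ⧸ q :=
  Submodule.mapQ p q LinearMap.id fun _ hx => h hx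

/-- In a quotient `B ⧸ (J • ⊤)`, every element of `I ≤ J` acts by zero. -/
lemma smul_quot_top_eq_zero {S : Type*} [CommRing S] {B : Type*} [AddCommGroup B]
    [Module S B] {I J : Ideal S} (h : I ≤ J) {r : S} (hr : r ∈ I)
    (z : B ⧸ (J • (⊤ : Submodule S B))) : r • z = 0 := by
  obtain ⟨y, rfl⟩ := Submodule.Quotient.mk_surjective _ z
  rw [← Submodule.Quotient.mk_smul, Submodule.Quotient.mk_eq_zero]
  exact Submodule.smul_mem_smul (h hr) Submodule.mem_top

/-- `Ideal.Quotient.factor` as an `S`-algebra homomorphism. -/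
def factorAlgHom {S : Type*} [CommRing S] (I J : Ideal S) (h : I ≤ J) :
    (S ⧸ I) →ₐ[S] S ⧸ J :=
  { Ideal.Quotient.factor h with
    commutes' := fun s => by
      simp [Ideal.Quotient.algebraMap_eq, RingHom.toMonoidHom_eq_coe] }

section Compat

variable (k : Type) [Field k] (n : ℕ) (S : Type) [CommRing S] [Algebra (SNCModel k n) S]

/-- The subalgebra of compatible tuples `(sᵢ)ᵢ` in `∏_{i ∈ ι} S/I_{e i}`: tuples whose
entries agree pairwise in `S/(I_{e i} + I_{e j})`. -/
def compatAlg {ι : Type} (e : ι → Fin n) :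
    Subalgebra S (∀ i : ι, S ⧸ xIdeal k n S (e i)) :=
  ⨅ (i : ι) (j : ι) (_ : i ≠ j),
    AlgHom.equalizer
      ((factorAlgHom (xIdeal k n S (e i)) (xIdeal k n S (e i) ⊔ xIdeal k n S (e j))
          le_sup_left).comp (Pi.evalAlgHom S (fun i : ι => S ⧸ xIdeal k n S (e i)) i))
      ((factorAlgHom (xIdeal k n S (e j)) (xIdeal k n S (e i) ⊔ xIdeal k n S (e j))
          le_sup_right).comp (Pi.evalAlgHom S (fun i : ι => S ⧸ xIdeal k n S (e i)) j))


end Compat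

section Hierarchical

variable (k : Type) [Field k] (m : ℕ) (S : Type) [CommRing S]
  [Algebra (SNCModel k (m + 1)) S]
variable (M : Fin (m + 1) → Type) [∀ i, AddCommGroup (M i)] [∀ i, Module S (M i)]
variable (φ : ∀ i j : Fin (m + 1), i ≠ j →
  ((M i ⧸ xIdeal k (m + 1) S j • (⊤ : Submodule S (M i))) ≃ₗ[S]
    (M j ⧸ xIdeal k (m + 1) S i • (⊤ : Submodule S (M j)))))

/-- The fiber product module `M₁ ×_φ ⋯ ×_φ M_{n-1}` of the first `n-1` pieces of the
descent data. -/
def fiberProdFirst : Submodule S (∀ i : Fin m, M i.castSucc) :=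
  ⨅ (i : Fin m) (j : Fin m) (h : i ≠ j),
    LinearMap.eqLocus
      ((φ i.castSucc j.castSucc ((Fin.castSucc_injective m).ne h)).toLinearMap.comp
        ((Submodule.mkQ
          (xIdeal k (m + 1) S j.castSucc • (⊤ : Submodule S (M i.castSucc)))).comp
          (LinearMap.proj i)))
      ((Submodule.mkQ
        (xIdeal k (m + 1) S i.castSucc • (⊤ : Submodule S (M j.castSucc)))).comp
        (LinearMap.proj j))

end Hierarchical

section Alevel

variable (k : Type) [Field k] (n : ℕ)

/-- auxiliary: product of monomials -/
lemma prod_monomial_one {R σ : Type*} [CommSemiring R] [DecidableEq σ] (s : Finset σ)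
    (f : σ → (σ →₀ ℕ)) :
    (∏ j ∈ s, (monomial (f j) 1 : MvPolynomial σ R)) = monomial (∑ j ∈ s, f j) 1 := by
  induction s using Finset.induction with
  | empty => simp [MvPolynomial.monomial_zero', MvPolynomial.C_1]
  | insert _ _ hj ih =>
      rw [Finset.prod_insert hj, Finset.sum_insert hj, ih, monomial_mul]; norm_num

lemma prodX_eq_monomial :
    (∏ j : Fin n, (X j : MvPolynomial (Fin n) k)) =
      monomial (∑ j : Fin n, Finsupp.single j 1) 1 := by
  classical
  have : ∀ j : Fin n, (X j : MvPolynomial (Fin n) k) = monomial (Finsupp.single j 1) 1 :=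
    fun j => rfl
  calc (∏ j : Fin n, (X j : MvPolynomial (Fin n) k))
      = ∏ j : Fin n, monomial (Finsupp.single j 1) 1 := by simp [this]
    _ = monomial (∑ j : Fin n, Finsupp.single j 1) 1 := prod_monomial_one _ _

/-- The ideal generated by the variables in `U` together with the product of all variables. -/
noncomputable def JA (U : Finset (Fin n)) : Ideal (MvPolynomial (Fin n) k) :=
  Ideal.span ((fun u => X u) '' ↑U ∪ {∏ j, X j})

lemma A_colon {i : Fin n} {U : Finset (Fin n)} (hi : i ∉ U) (hU : U.Nonempty)
    {f : MvPolynomial (Fin n) k} (hf : f * X i ∈ JA k n U) : f ∈ JA k n U := by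
  classical
  have hE : JA k n U = Ideal.span ((fun s => (monomial s 1 : MvPolynomial (Fin n) k)) ''
      (((fun u => Finsupp.single u 1) '' ↑U) ∪ {∑ j, Finsupp.single j 1})) := by
    rw [JA, Set.image_union, Set.image_image, Set.image_singleton, prodX_eq_monomial]
    rfl
  rw [hE, mem_ideal_span_monomial_image] at hf ⊢
  intro d hd
  have hd' : d + Finsupp.single i 1 ∈ (f * X i).support := by
    rw [support_mul_X]
    exact Finset.mem_map.2 ⟨d, hd, rfl⟩
  obtain ⟨s, hs, hle⟩ := hf _ hd'
  obtain ⟨u0, hu0⟩ := hU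
  rcases hs with ⟨u, hu, rfl⟩ | hs
  · have hui : u ≠ i := fun h => hi (h ▸ hu)
    refine ⟨Finsupp.single u 1, Or.inl ⟨u, hu, rfl⟩, ?_⟩
    rw [Finsupp.single_le_iff] at hle ⊢
    simpa [Finsupp.single_apply, hui.symm] using hle
  · have hs' : s = ∑ j, Finsupp.single j 1 := by simpa using hs
    subst hs'
    have hu0i : u0 ≠ i := fun h => hi (h ▸ hu0)
    refine ⟨Finsupp.single u0 1, Or.inl ⟨u0, hu0, rfl⟩, ?_⟩
    rw [Finsupp.single_le_iff]
    have h1 : (∑ j : Fin n, Finsupp.single j (1:ℕ)) u0 = 1 := by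
      rw [Finsupp.finset_sum_apply]
      simp [Finsupp.single_apply]
    have h2 := (Finsupp.le_def.1 hle) u0
    rw [h1] at h2
    simpa [Finsupp.single_apply, hu0i.symm] using h2

end Alevel
section Slevel

variable (k : Type) [Field k] (n : ℕ) (S : Type) [CommRing S] [Algebra (SNCModel k n) S]

/-- The image of the variable `xᵢ` in `S`. -/
noncomputable def xSv (i : Fin n) : S :=
  algebraMap (SNCModel k n) S (Ideal.Quotient.mk (sncIdeal k n) (X i))

/-- The image of the variable `xᵢ` in `R`. -/
noncomputable def rSv (i : Fin n) : SNCModel k n := Ideal.Quotient.mk (sncIdeal k n) (X i)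

/-- The ideal of `S` generated by the variables in `U`. -/
noncomputable def IS (U : Finset (Fin n)) : Ideal S :=
  Ideal.span ((fun u => xSv k n S u) '' ↑U)

/-- The ideal of `R` generated by the variables in `U`. -/
noncomputable def JR (U : Finset (Fin n)) : Ideal (SNCModel k n) :=
  Ideal.span ((fun u => rSv k n u) '' ↑U)

/-- The product of the variables in `T`, in `S`. -/
noncomputable def piS (T : Finset (Fin n)) : S := ∏ i ∈ T, xSv k n S i

lemma IS_singleton (i : Fin n) : IS k n S {i} = xIdeal k n S i := by
  simp only [IS, Finset.coe_singleton, Set.image_singleton]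
  rfl

lemma IS_singleton' (i : Fin n) : IS k n S {i} = Ideal.span {xSv k n S i} := by
  simp [IS]

lemma IS_insert (j : Fin n) (U : Finset (Fin n)) [DecidableEq (Fin n)] :
    IS k n S (insert j U) = Ideal.span {xSv k n S j} ⊔ IS k n S U := by
  simp only [IS, Finset.coe_insert, Set.image_insert_eq]
  rw [Ideal.span_insert]

lemma xSv_mem_IS {i : Fin n} {U : Finset (Fin n)} (h : i ∈ U) : xSv k n S i ∈ IS k n S U :=
  Ideal.subset_span ⟨i, h, rfl⟩

lemma JR_eq_map (U : Finset (Fin n)) :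
    JR k n U = Ideal.map (Ideal.Quotient.mk (sncIdeal k n))
      (Ideal.span ((fun u => (X u : MvPolynomial (Fin n) k)) '' ↑U)) := by
  rw [Ideal.map_span, Set.image_image]; rfl

lemma IS_eq_map (U : Finset (Fin n)) :
    IS k n S U = Ideal.map (algebraMap (SNCModel k n) S) (JR k n U) := by
  rw [JR, Ideal.map_span, Set.image_image]; rfl

lemma R_colon {i : Fin n} {U : Finset (Fin n)} (hi : i ∉ U) (hU : U.Nonempty)
    {b : SNCModel k n} (hb : b * rSv k n i ∈ JR k n U) : b ∈ JR k n U := by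
  obtain ⟨f, rfl⟩ := Ideal.Quotient.mk_surjective b
  rw [JR_eq_map] at hb ⊢
  have hsup : Ideal.span ((fun u => (X u : MvPolynomial (Fin n) k)) '' ↑U) ⊔ sncIdeal k n
      = JA k n U := by
    rw [JA, Ideal.span_union]
  have hb' : Ideal.Quotient.mk (sncIdeal k n) (f * X i) ∈
      Ideal.map (Ideal.Quotient.mk (sncIdeal k n))
        (Ideal.span ((fun u => (X u : MvPolynomial (Fin n) k)) '' ↑U)) := by
    rw [map_mul]; exact hb
  rw [Ideal.mem_quotient_iff_mem_sup, hsup] at hb' ⊢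
  exact A_colon k n hi hU hb'

lemma S_colon_single [Module.Flat (SNCModel k n) S] {i : Fin n} {U : Finset (Fin n)}
    (hi : i ∉ U) (hU : U.Nonempty) {f : S}
    (hf : f * xSv k n S i ∈ IS k n S U) : f ∈ IS k n S U := by
  classical
  rw [IS, Ideal.span, Submodule.mem_span_set] at hf
  obtain ⟨c, hsupp, hsum⟩ := hf
  have hchoice : ∀ z ∈ c.support, ∃ u ∈ U, xSv k n S u = z := by
    intro z hz
    obtain ⟨u, hu, hx⟩ := hsupp hz
    exact ⟨u, hu, hx⟩
  choose uFor huFor hxFor using hchoice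
  let fR : Option {z : S // z ∈ c.support} → SNCModel k n :=
    fun o => Option.rec (rSv k n i) (fun z => -(rSv k n (uFor z.1 z.2))) o
  let vs : Option {z : S // z ∈ c.support} → S := fun o => Option.rec f (fun z => c z.1) o
  have htriv : Module.IsTrivialRelation fR vs := by
    apply Module.Flat.isTrivialRelation_of_sum_smul_eq_zero
    show ∑ o : Option {z : S // z ∈ c.support}, fR o • vs o = 0
    rw [Fintype.sum_option]
    have h1 : fR none • vs none = f * xSv k n S i := by
      show rSv k n i • f = _
      rw [Algebra.smul_def, mul_comm]
      rfl
    have h2 : ∀ z : {z : S // z ∈ c.support}, fR (some z) • vs (some z) = -(c z.1 * z.1) := by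
      intro z
      show (-(rSv k n (uFor z.1 z.2))) • (c z.1) = _
      rw [Algebra.smul_def, map_neg, neg_mul, mul_comm]
      rw [show (algebraMap (SNCModel k n) S) (rSv k n (uFor z.1 z.2)) = xSv k n S (uFor z.1 z.2)
        from rfl, hxFor z.1 z.2]
    rw [h1, Finset.sum_congr rfl (fun z _ => h2 z), Finset.sum_neg_distrib]
    have h3 : ∑ z : {z : S // z ∈ c.support}, c z.1 * z.1 = f * xSv k n S i := by
      rw [← hsum, Finsupp.sum, Finset.sum_coe_sort c.support (fun z => c z * z)]
      exact Finset.sum_congr rfl (fun z _ => (smul_eq_mul _ _).symm)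
    rw [h3]
    ring
  obtain ⟨κ, a, y, hy, ha⟩ := htriv
  have hmem : ∀ j : Fin κ, a none j ∈ JR k n U := by
    intro j
    have h0 := ha j
    rw [Fintype.sum_option] at h0
    have heq : rSv k n i * a none j =
        ∑ z : {z : S // z ∈ c.support}, rSv k n (uFor z.1 z.2) * a (some z) j := by
      have h4 : ∀ z : {z : S // z ∈ c.support}, fR (some z) * a (some z) j
          = -(rSv k n (uFor z.1 z.2) * a (some z) j) := by
        intro z; show (-(rSv k n (uFor z.1 z.2))) * _ = _; ring
      rw [Finset.sum_congr rfl (fun z _ => h4 z), Finset.sum_neg_distrib,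
        add_neg_eq_zero] at h0
      exact h0
    have hR : a none j * rSv k n i ∈ JR k n U := by
      rw [mul_comm, heq]
      exact Ideal.sum_mem _ (fun z _ => Ideal.mul_mem_right _ _
        (Ideal.subset_span ⟨uFor z.1 z.2, huFor z.1 z.2, rfl⟩))
    exact R_colon k n hi hU hR
  have hf' : f = ∑ j : Fin κ, a none j • y j := hy none
  rw [hf']
  refine Ideal.sum_mem _ (fun j _ => ?_)
  rw [Algebra.smul_def]
  refine Ideal.mul_mem_right _ _ ?_
  rw [IS_eq_map]
  exact Ideal.mem_map_of_mem _ (hmem j)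

end Slevel
section Slevel2

variable (k : Type) [Field k] (n : ℕ) (S : Type) [CommRing S] [Algebra (SNCModel k n) S]
  [Module.Flat (SNCModel k n) S]

lemma S_colon_prod {T U : Finset (Fin n)} (hd : Disjoint T U) (hU : U.Nonempty)
    {f : S} (hf : f * piS k n S T ∈ IS k n S U) : f ∈ IS k n S U := by
  classical
  induction T using Finset.induction generalizing f with
  | empty => simpa [piS] using hf
  | @insert j T hj ih =>
      have hd' : Disjoint T U := (Finset.disjoint_insert_left.1 hd).2
      have hjU : j ∉ U := (Finset.disjoint_insert_left.1 hd).1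
      have h1 : (f * xSv k n S j) * piS k n S T ∈ IS k n S U := by
        simp only [piS, Finset.prod_insert hj] at hf ⊢
        rw [← mul_assoc] at hf
        exact hf
      exact S_colon_single k n S hjU hU (ih hd' h1)

lemma S_inter {T W : Finset (Fin n)} (hd : Disjoint T W)
    {s : S} (hs : ∀ i ∈ T, s ∈ IS k n S {i} ⊔ IS k n S W) :
    s ∈ Ideal.span {piS k n S T} ⊔ IS k n S W := by
  classical
  induction T using Finset.induction generalizing s with
  | empty =>
      refine Submodule.mem_sup_left ?_
      rw [Ideal.mem_span_singleton]
      exact ⟨s, by simp [piS, mul_comm]⟩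
  | @insert j T hj ih =>
      have hd' : Disjoint T W := (Finset.disjoint_insert_left.1 hd).2
      have hjW : j ∉ W := (Finset.disjoint_insert_left.1 hd).1
      have hIH : s ∈ Ideal.span {piS k n S T} ⊔ IS k n S W :=
        ih hd' (fun i hi => hs i (Finset.mem_insert_of_mem hi))
      obtain ⟨z1, hz1, z2, hz2, hzz⟩ := Submodule.mem_sup.1 hIH
      obtain ⟨c, hc⟩ := Ideal.mem_span_singleton'.1 hz1
      -- c * piS T ∈ IS (insert j W)
      have hcpi : c * piS k n S T ∈ IS k n S (insert j W) := by
        have h2 : s ∈ IS k n S {j} ⊔ IS k n S W := hs j (Finset.mem_insert_self j T)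
        have h3 : IS k n S {j} ⊔ IS k n S W = IS k n S (insert j W) := by
          rw [IS_insert, IS_singleton]
          rfl
        have h4 : c * piS k n S T = s - z2 := by rw [← hzz, hc]; ring
        rw [h4]
        exact sub_mem (h3 ▸ h2) ((IS_insert k n S j W ▸
          (Submodule.mem_sup_right hz2 : z2 ∈ _)))
      have hdisj2 : Disjoint T (insert j W) := by
        rw [Finset.disjoint_insert_right]
        exact ⟨hj, hd'⟩
      have hc2 : c ∈ IS k n S (insert j W) :=
        S_colon_prod k n S hdisj2 (Finset.insert_nonempty j W) hcpi
      rw [IS_insert] at hc2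
      obtain ⟨w1, hw1, w2, hw2, hww⟩ := Submodule.mem_sup.1 hc2
      obtain ⟨a, ha⟩ := Ideal.mem_span_singleton'.1 hw1
      have hkey : s = a * piS k n S (insert j T) + (w2 * piS k n S T + z2) := by
        have h5 : c = a * xSv k n S j + w2 := by rw [← hww, ha]
        simp only [piS, Finset.prod_insert hj]
        rw [← hzz, ← hc, h5]
        simp only [piS]
        ring
      rw [hkey]
      refine Submodule.add_mem _ (Submodule.mem_sup_left ?_) (Submodule.mem_sup_right ?_)
      · exact Ideal.mem_span_singleton'.2 ⟨a, rfl⟩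
      · exact Submodule.add_mem _ (Ideal.mul_mem_right _ _ hw2) hz2

lemma S_glue {T W : Finset (Fin n)} (hd : Disjoint T W) {f : Fin n → S}
    (hf : ∀ i ∈ T, ∀ j ∈ T, f i - f j ∈ IS k n S {i} ⊔ IS k n S {j} ⊔ IS k n S W) :
    ∃ g : S, ∀ i ∈ T, g - f i ∈ IS k n S {i} ⊔ IS k n S W := by
  classical
  induction T using Finset.induction with
  | empty => exact ⟨0, by simp⟩
  | @insert j T hj ih =>
      have hd' : Disjoint T W := (Finset.disjoint_insert_left.1 hd).2
      have hjW : j ∉ W := (Finset.disjoint_insert_left.1 hd).1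
      obtain ⟨g, hg⟩ := ih hd' (fun i hi l hl =>
        hf i (Finset.mem_insert_of_mem hi) l (Finset.mem_insert_of_mem hl))
      have hdmem : ∀ i ∈ T, f j - g ∈ IS k n S {i} ⊔ IS k n S (insert j W) := by
        intro i hi
        have h1 : f j - f i ∈ IS k n S {j} ⊔ IS k n S {i} ⊔ IS k n S W :=
          hf j (Finset.mem_insert_self j T) i (Finset.mem_insert_of_mem hi)
        have h2 : f i - g ∈ IS k n S {i} ⊔ IS k n S W :=
          by simpa [neg_sub] using Submodule.neg_mem _ (hg i hi)
        have h3 : f j - g = (f j - f i) + (f i - g) := by ring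
        rw [h3, IS_insert, ← IS_singleton' k n S j]
        refine Submodule.add_mem _ ?_ ?_
        · obtain ⟨x1, hx1, x2, hx2, hxx⟩ := Submodule.mem_sup.1 h1
          obtain ⟨y1, hy1, y2, hy2, hyy⟩ := Submodule.mem_sup.1 hx1
          rw [← hxx, ← hyy]
          exact Submodule.add_mem _
            (Submodule.add_mem _ (Submodule.mem_sup_right (Submodule.mem_sup_left hy1))
              (Submodule.mem_sup_left hy2))
            (Submodule.mem_sup_right (Submodule.mem_sup_right hx2))
        · obtain ⟨y1, hy1, y2, hy2, hyy⟩ := Submodule.mem_sup.1 h2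
          rw [← hyy]
          exact Submodule.add_mem _ (Submodule.mem_sup_left hy1)
            (Submodule.mem_sup_right (Submodule.mem_sup_right hy2))
      have hdisj2 : Disjoint T (insert j W) := by
        rw [Finset.disjoint_insert_right]; exact ⟨hj, hd'⟩
      have hint : f j - g ∈ Ideal.span {piS k n S T} ⊔ IS k n S (insert j W) :=
        S_inter k n S hdisj2 hdmem
      rw [IS_insert] at hint
      obtain ⟨z1, hz1, z23, hz23, hzz⟩ := Submodule.mem_sup.1 hint
      obtain ⟨zj, hzj, zw, hzw, hzz2⟩ := Submodule.mem_sup.1 hz23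
      obtain ⟨c, hc⟩ := Ideal.mem_span_singleton'.1 hz1
      refine ⟨g + c * piS k n S T + zw, ?_⟩
      intro i hi
      rcases Finset.mem_insert.1 hi with rfl | hiT
      · have h6 : f i - g = c * piS k n S T + (zj + zw) := by
          rw [hc, hzz2, hzz]
        have hcase : g + c * piS k n S T + zw - f i = -zj := by
          linear_combination -h6
        rw [hcase]
        exact Submodule.neg_mem _ (Submodule.mem_sup_left ((IS_singleton' k n S i).symm ▸ hzj))
      · have hsplit : g + c * piS k n S T + zw - f i
            = (g - f i) + c * piS k n S T + zw := by ring
        rw [hsplit]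
        refine Submodule.add_mem _ (Submodule.add_mem _ (hg i hiT) ?_) ?_
        · refine Submodule.mem_sup_left (Ideal.mul_mem_left _ _ ?_)
          rw [IS_singleton', Ideal.mem_span_singleton]
          simp only [piS]
          exact Finset.dvd_prod_of_mem _ hiT
        · exact Submodule.mem_sup_right hzw

end Slevel2
section Plevel

variable {B : Type} [CommRing B] {P : Type*} [AddCommGroup P] [Module B P]

lemma P_split [Module.Finite B P] [Module.Projective B P] :
    ∃ (N : ℕ) (u : P →ₗ[B] (Fin N → B)) (p : (Fin N → B) →ₗ[B] P), ∀ z : P, p (u z) = z := by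
  classical
  obtain ⟨N, s, hs⟩ := Module.Finite.exists_fin (R := B) (M := P)
  let bF := Pi.basisFun B (Fin N)
  let p : (Fin N → B) →ₗ[B] P := bF.constr B s
  have hsurj : Function.Surjective p := by
    rw [← LinearMap.range_eq_top, ← top_le_iff, ← hs, Submodule.span_le]
    rintro - ⟨i, rfl⟩
    exact ⟨bF i, by simp [p]⟩
  obtain ⟨u, hu⟩ := Module.projective_lifting_property p LinearMap.id hsurj
  refine ⟨N, u, p, fun z => ?_⟩
  have := LinearMap.congr_fun hu z
  simpa using this

lemma pi_mem_ideal_smul_top (J : Ideal B) {N : ℕ} (v : Fin N → B) :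
    v ∈ J • (⊤ : Submodule B (Fin N → B)) ↔ ∀ m, v m ∈ J := by
  constructor
  · intro hv m
    refine Submodule.smul_induction_on hv (fun r hr w _ => ?_) (fun x y hx hy => ?_)
    · exact Ideal.mul_mem_right _ _ hr
    · exact Ideal.add_mem _ hx hy
  · intro hv
    classical
    have hv' : v = ∑ m : Fin N, Pi.single m (v m) := (Finset.univ_sum_single v).symm
    rw [hv']
    refine Submodule.sum_mem _ (fun m _ => ?_)
    have hps : Pi.single m (v m) = (v m) • (Pi.single m (1:B) : Fin N → B) := by
      ext l
      by_cases hl : l = m <;> simp [Pi.single_apply, hl]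
    rw [hps]
    exact Submodule.smul_mem_smul (hv m) Submodule.mem_top

lemma linearMap_ideal_smul_top {Q : Type*} [AddCommGroup Q] [Module B Q]
    (g : P →ₗ[B] Q) (J : Ideal B) {z : P} (hz : z ∈ J • (⊤ : Submodule B P)) :
    g z ∈ J • (⊤ : Submodule B Q) := by
  have := Submodule.map_smul'' J (⊤ : Submodule B P) g
  have hmem : g z ∈ Submodule.map g (J • (⊤ : Submodule B P)) := ⟨z, hz, rfl⟩
  rw [this] at hmem
  exact Submodule.smul_mono le_rfl le_top hmem

lemma P_colon [Module.Finite B P] [Module.Projective B P] (J : Ideal B) (c : B)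
    (hc : ∀ σ : B, σ * c ∈ J → σ ∈ J) {z : P}
    (hz : c • z ∈ J • (⊤ : Submodule B P)) : z ∈ J • (⊤ : Submodule B P) := by
  obtain ⟨N, u, p, hup⟩ := P_split (B := B) (P := P)
  have h1 : u (c • z) ∈ J • (⊤ : Submodule B (Fin N → B)) :=
    linearMap_ideal_smul_top u J hz
  rw [map_smul] at h1
  rw [pi_mem_ideal_smul_top] at h1
  have h2 : ∀ m, (u z) m ∈ J := by
    intro m
    refine hc _ ?_
    have := h1 m
    simpa [mul_comm] using this
  have h3 : u z ∈ J • (⊤ : Submodule B (Fin N → B)) := (pi_mem_ideal_smul_top _ _).2 h2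
  have := linearMap_ideal_smul_top p J h3
  rwa [hup] at this

lemma P_inter [Module.Finite B P] [Module.Projective B P] {ι₀ : Type*} (T : Finset ι₀)
    (Jf : ι₀ → Ideal B) (K : Ideal B)
    (h : ∀ σ : B, (∀ i ∈ T, σ ∈ Jf i) → σ ∈ K) {z : P}
    (hz : ∀ i ∈ T, z ∈ Jf i • (⊤ : Submodule B P)) : z ∈ K • (⊤ : Submodule B P) := by
  obtain ⟨N, u, p, hup⟩ := P_split (B := B) (P := P)
  have h2 : ∀ m, (u z) m ∈ K := by
    intro m
    refine h _ (fun i hi => ?_)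
    exact (pi_mem_ideal_smul_top _ _).1 (linearMap_ideal_smul_top u _ (hz i hi)) m
  have h3 : u z ∈ K • (⊤ : Submodule B (Fin N → B)) := (pi_mem_ideal_smul_top _ _).2 h2
  have := linearMap_ideal_smul_top p K h3
  rwa [hup] at this

lemma P_glue [Module.Finite B P] [Module.Projective B P] {ι₀ : Type*} (T : Finset ι₀)
    (Jf : ι₀ → Ideal B)
    (h : ∀ fσ : ι₀ → B, (∀ i ∈ T, ∀ j ∈ T, fσ i - fσ j ∈ Jf i ⊔ Jf j) →
      ∃ gσ : B, ∀ i ∈ T, gσ - fσ i ∈ Jf i)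
    (v : ι₀ → P)
    (hv : ∀ i ∈ T, ∀ j ∈ T, v i - v j ∈ (Jf i ⊔ Jf j) • (⊤ : Submodule B P)) :
    ∃ w : P, ∀ i ∈ T, w - v i ∈ Jf i • (⊤ : Submodule B P) := by
  classical
  obtain ⟨N, u, p, hup⟩ := P_split (B := B) (P := P)
  have hcoord : ∀ m : Fin N, ∃ gσ : B, ∀ i ∈ T, gσ - (u (v i)) m ∈ Jf i := by
    intro m
    refine h (fun i => (u (v i)) m) (fun i hi j hj => ?_)
    have := (pi_mem_ideal_smul_top _ _).1 (linearMap_ideal_smul_top u _ (hv i hi j hj)) m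
    simpa [map_sub] using this
  choose gσ hgσ using hcoord
  refine ⟨p gσ, fun i hi => ?_⟩
  have h4 : gσ - u (v i) ∈ Jf i • (⊤ : Submodule B (Fin N → B)) :=
    (pi_mem_ideal_smul_top _ _).2 (fun m => by simpa using hgσ m i hi)
  have h5 := linearMap_ideal_smul_top p (Jf i) h4
  rw [map_sub, hup] at h5
  exact h5

/-- membership in a submodule generated by a singleton-span smul -/
lemma mem_span_singleton_smul_top_iff {c : B} {z : P} :
    z ∈ Ideal.span {c} • (⊤ : Submodule B P) ↔ ∃ b : P, z = c • b := by
  constructor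
  · intro hz
    refine Submodule.smul_induction_on hz (fun r hr w _ => ?_) ?_
    · obtain ⟨a, ha⟩ := Ideal.mem_span_singleton'.1 hr
      exact ⟨a • w, by rw [← ha, mul_smul]; rw [smul_comm]⟩
    · rintro x y ⟨b1, rfl⟩ ⟨b2, rfl⟩
      exact ⟨b1 + b2, by rw [smul_add]⟩
  · rintro ⟨b, rfl⟩
    exact Submodule.smul_mem_smul (Ideal.mem_span_singleton_self c) Submodule.mem_top

end Plevel

section Bridge

variable {S : Type} [CommRing S] (I : Ideal S) {P : Type*} [AddCommGroup P]
  [Module S P] [Module (S ⧸ I) P] [IsScalarTower S (S ⧸ I) P]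

lemma bridge_smul_top (J : Ideal S) {z : P} :
    z ∈ J • (⊤ : Submodule S P) ↔
      z ∈ (J.map (Ideal.Quotient.mk I)) • (⊤ : Submodule (S ⧸ I) P) := by
  constructor
  · intro hz
    refine Submodule.smul_induction_on hz (fun r hr w _ => ?_)
      (fun x y hx hy => Submodule.add_mem _ hx hy)
    have : r • w = (Ideal.Quotient.mk I r) • w := by
      rw [← Ideal.Quotient.algebraMap_eq, algebraMap_smul]
    rw [this]
    exact Submodule.smul_mem_smul (Ideal.mem_map_of_mem _ hr) Submodule.mem_top
  · intro hz
    refine Submodule.smul_induction_on hz (fun r hr w _ => ?_)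
      (fun x y hx hy => Submodule.add_mem _ hx hy)
    obtain ⟨s, hs, rfl⟩ := Ideal.mem_map_iff_of_surjective _
      Ideal.Quotient.mk_surjective |>.1 hr
    have : (Ideal.Quotient.mk I s) • w = s • w := by
      rw [← Ideal.Quotient.algebraMap_eq, algebraMap_smul]
    rw [this]
    exact Submodule.smul_mem_smul hs Submodule.mem_top

end Bridge
section Hier2

variable (k : Type) [Field k] (m : ℕ) (S : Type) [CommRing S]
  [Algebra (SNCModel k (m + 1)) S]
variable (M : Fin (m + 1) → Type) [∀ i, AddCommGroup (M i)] [∀ i, Module S (M i)]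
variable (φ : ∀ i j : Fin (m + 1), i ≠ j →
  ((M i ⧸ xIdeal k (m + 1) S j • (⊤ : Submodule S (M i))) ≃ₗ[S]
    (M j ⧸ xIdeal k (m + 1) S i • (⊤ : Submodule S (M j)))))

lemma castSucc_ne_last (i : Fin m) : i.castSucc ≠ Fin.last m :=
  (Fin.castSucc_lt_last i).ne

/-- The diagonal map `M ℓ → ∏ᵢ M ℓ / Iᵢ M ℓ`. -/
noncomputable def deltaMap : M (Fin.last m) →ₗ[S]
    ∀ i : Fin m, (M (Fin.last m) ⧸ xIdeal k (m + 1) S i.castSucc •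
      (⊤ : Submodule S (M (Fin.last m)))) :=
  LinearMap.pi (fun i => Submodule.mkQ _)

/-- The comparison map `M' → ∏ᵢ M ℓ / Iᵢ M ℓ` built from the descent isomorphisms. -/
noncomputable def rhoMap : fiberProdFirst k m S M φ →ₗ[S]
    ∀ i : Fin m, (M (Fin.last m) ⧸ xIdeal k (m + 1) S i.castSucc •
      (⊤ : Submodule S (M (Fin.last m)))) :=
  LinearMap.pi (fun i =>
    ((φ i.castSucc (Fin.last m) (castSucc_ne_last m i)).toLinearMap.comp
      ((Submodule.mkQ _).comp ((LinearMap.proj i).comp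
        (fiberProdFirst k m S M φ).subtype))))

lemma deltaMap_apply (w : M (Fin.last m)) (i : Fin m) :
    deltaMap k m S M w i = Submodule.Quotient.mk w := rfl

lemma rhoMap_apply (z : fiberProdFirst k m S M φ) (i : Fin m) :
    rhoMap k m S M φ z i = φ i.castSucc (Fin.last m) (castSucc_ne_last m i)
      (Submodule.Quotient.mk ((z : ∀ i : Fin m, M i.castSucc) i)) := rfl

lemma mem_fiberProdFirst (v : ∀ i : Fin m, M i.castSucc) :
    v ∈ fiberProdFirst k m S M φ ↔ ∀ (i j : Fin m) (h : i ≠ j),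
      φ i.castSucc j.castSucc ((Fin.castSucc_injective m).ne h)
        (Submodule.Quotient.mk (v i)) = Submodule.Quotient.mk (v j) := by
  simp only [fiberProdFirst, Submodule.mem_iInf, LinearMap.mem_eqLocus,
    LinearMap.coe_comp, Function.comp_apply, LinearMap.coe_proj,
    Function.eval, LinearEquiv.coe_coe, Submodule.mkQ_apply]

end Hier2
section Hier3

variable (k : Type) [Field k] (m : ℕ) (S : Type) [CommRing S]
  [Algebra (SNCModel k (m + 1)) S] [Module.Flat (SNCModel k (m + 1)) S]
variable (M : Fin (m + 1) → Type) [∀ i, AddCommGroup (M i)] [∀ i, Module S (M i)]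
  [∀ i, Module (S ⧸ xIdeal k (m + 1) S i) (M i)]
  [∀ i, IsScalarTower S (S ⧸ xIdeal k (m + 1) S i) (M i)]
  [∀ i, Module.Finite (S ⧸ xIdeal k (m + 1) S i) (M i)]
  [∀ i, Module.Projective (S ⧸ xIdeal k (m + 1) S i) (M i)]
variable (φ : ∀ i j : Fin (m + 1), i ≠ j →
  ((M i ⧸ xIdeal k (m + 1) S j • (⊤ : Submodule S (M i))) ≃ₗ[S]
    (M j ⧸ xIdeal k (m + 1) S i • (⊤ : Submodule S (M j)))))

lemma xIdeal_eq_span (i : Fin (m + 1)) :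
    xIdeal k (m + 1) S i = Ideal.span {xSv k (m + 1) S i} := rfl

lemma xIdeal_eq_IS (i : Fin (m + 1)) : xIdeal k (m + 1) S i = IS k (m + 1) S {i} :=
  (IS_singleton k (m + 1) S i).symm

/-- The image Finset of `castSucc`. -/
noncomputable def TcS : Finset (Fin (m + 1)) := Finset.image Fin.castSucc Finset.univ

lemma mem_TcS {j : Fin (m + 1)} : j ∈ TcS m ↔ ∃ i : Fin m, i.castSucc = j := by
  simp only [TcS, Finset.mem_image, Finset.mem_univ, true_and]

lemma TcS_disj_last : Disjoint (TcS m) ({Fin.last m} : Finset (Fin (m + 1))) := by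
  rw [Finset.disjoint_singleton_right]
  rw [mem_TcS]
  rintro ⟨i, hi⟩
  exact castSucc_ne_last m i hi

/-- The product of the first `m` variables in `S`. -/
noncomputable def piX : S := ∏ i : Fin m, xSv k (m + 1) S i.castSucc

lemma piS_TcS : piS k (m + 1) S (TcS m) = piX k m S := by
  rw [piS, TcS, Finset.prod_image (fun i _ j _ h => Fin.castSucc_injective m h)]
  rfl

lemma piX_mem (i : Fin m) : piX k m S ∈ xIdeal k (m + 1) S i.castSucc := by
  rw [xIdeal_eq_span, Ideal.mem_span_singleton, piX]
  exact Finset.dvd_prod_of_mem _ (Finset.mem_univ i)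

/-- The key intersection property transported to the quotient ring `S/I_t`. -/
lemma Q_inter_hyp (σ : S ⧸ xIdeal k (m + 1) S (Fin.last m))
    (hσ : ∀ i : Fin m, σ ∈ (xIdeal k (m + 1) S i.castSucc).map
      (Ideal.Quotient.mk (xIdeal k (m + 1) S (Fin.last m)))) :
    σ ∈ (Ideal.span {piX k m S}).map
      (Ideal.Quotient.mk (xIdeal k (m + 1) S (Fin.last m))) := by
  obtain ⟨s, rfl⟩ := Ideal.Quotient.mk_surjective σ
  have hs : ∀ j ∈ TcS m, s ∈ IS k (m + 1) S {j} ⊔ IS k (m + 1) S {Fin.last m} := by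
    intro j hj
    obtain ⟨i, rfl⟩ := (mem_TcS m).1 hj
    have := Ideal.mem_quotient_iff_mem_sup.1 (hσ i)
    rwa [xIdeal_eq_IS, xIdeal_eq_IS] at this
  have hint := S_inter k (m + 1) S (TcS_disj_last m) hs
  rw [piS_TcS] at hint
  rw [Ideal.mem_quotient_iff_mem_sup]
  rwa [xIdeal_eq_IS]

lemma ker_deltaMap :
    LinearMap.ker (deltaMap k m S M) =
      Ideal.span {piX k m S} • (⊤ : Submodule S (M (Fin.last m))) := by
  rw [deltaMap, LinearMap.ker_pi]
  simp only [Submodule.ker_mkQ]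
  apply le_antisymm
  · intro z hz
    rw [Submodule.mem_iInf] at hz
    have hz' : ∀ i ∈ (Finset.univ : Finset (Fin m)), z ∈
        ((xIdeal k (m + 1) S i.castSucc).map
          (Ideal.Quotient.mk (xIdeal k (m + 1) S (Fin.last m)))) •
          (⊤ : Submodule (S ⧸ xIdeal k (m + 1) S (Fin.last m)) (M (Fin.last m))) :=
      fun i _ => (bridge_smul_top _ _).1 (hz i)
    have hP := P_inter (Finset.univ : Finset (Fin m))
      (fun i => (xIdeal k (m + 1) S i.castSucc).map
        (Ideal.Quotient.mk (xIdeal k (m + 1) S (Fin.last m))))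
      ((Ideal.span {piX k m S}).map (Ideal.Quotient.mk (xIdeal k (m + 1) S (Fin.last m))))
      (fun σ hσ => Q_inter_hyp k m S σ (fun i => hσ i (Finset.mem_univ i))) hz'
    exact (bridge_smul_top _ _).2 hP
  · rw [le_iInf_iff]
    intro i
    exact Submodule.smul_mono_left (by
      rw [Ideal.span_le, Set.singleton_subset_iff]
      exact piX_mem k m S i)

/-- colon hypothesis in the quotient ring `S/I_t`: `x_last` is a nonzerodivisor
modulo the mapped ideal of two castSucc-variables. -/
lemma Q_colon_hyp (i j t : Fin m)
    (σ : S ⧸ xIdeal k (m + 1) S t.castSucc)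
    (hσ : σ * (Ideal.Quotient.mk (xIdeal k (m + 1) S t.castSucc)
        (xSv k (m + 1) S (Fin.last m))) ∈
      ((xIdeal k (m + 1) S i.castSucc ⊔ xIdeal k (m + 1) S j.castSucc).map
        (Ideal.Quotient.mk (xIdeal k (m + 1) S t.castSucc)))) :
    σ ∈ (xIdeal k (m + 1) S i.castSucc ⊔ xIdeal k (m + 1) S j.castSucc).map
      (Ideal.Quotient.mk (xIdeal k (m + 1) S t.castSucc)) := by
  classical
  obtain ⟨s, rfl⟩ := Ideal.Quotient.mk_surjective σ
  rw [← map_mul, Ideal.mem_quotient_iff_mem_sup] at hσ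
  rw [Ideal.mem_quotient_iff_mem_sup]
  have hU : (xIdeal k (m + 1) S i.castSucc ⊔ xIdeal k (m + 1) S j.castSucc) ⊔
      xIdeal k (m + 1) S t.castSucc
      = IS k (m + 1) S ({i.castSucc, j.castSucc, t.castSucc} : Finset (Fin (m + 1))) := by
    rw [IS_insert, IS_insert, IS_singleton]
    rw [xIdeal_eq_span, xIdeal_eq_span, sup_assoc]
  rw [hU] at hσ ⊢
  refine S_colon_single k (m + 1) S ?_ ?_ hσ
  · intro hmem
    simp only [Finset.mem_insert, Finset.mem_singleton] at hmem
    rcases hmem with h | h | h <;> exact castSucc_ne_last m _ h.symm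
  · exact Finset.insert_nonempty _ _

lemma ker_rhoMap
    (hsymm : ∀ (i j : Fin (m + 1)) (h : i ≠ j), φ j i h.symm = (φ i j h).symm) :
    LinearMap.ker (rhoMap k m S M φ) =
      xIdeal k (m + 1) S (Fin.last m) •
        (⊤ : Submodule S (fiberProdFirst k m S M φ)) := by
  apply le_antisymm
  · intro z hz
    rw [LinearMap.mem_ker] at hz
    have hcomp : ∀ i : Fin m, (z : ∀ i : Fin m, M i.castSucc) i ∈
        xIdeal k (m + 1) S (Fin.last m) • (⊤ : Submodule S (M i.castSucc)) := by
      intro i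
      have h0 : rhoMap k m S M φ z i = 0 := by rw [hz]; rfl
      rw [rhoMap_apply] at h0
      have h1 := (LinearEquiv.map_eq_zero_iff _).1 h0
      rwa [Submodule.Quotient.mk_eq_zero] at h1
    have hchoose : ∀ i : Fin m, ∃ b : M i.castSucc,
        (z : ∀ i : Fin m, M i.castSucc) i = xSv k (m + 1) S (Fin.last m) • b := by
      intro i
      refine mem_span_singleton_smul_top_iff.1 ?_
      rw [← xIdeal_eq_span]
      exact hcomp i
    choose u hu using hchoose
    have hzmem := (mem_fiberProdFirst k m S M φ _).1 z.2
    have humem : u ∈ fiberProdFirst k m S M φ := by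
      rw [mem_fiberProdFirst]
      intro i j hij
      obtain ⟨y, hy⟩ := Submodule.Quotient.mk_surjective _
        (φ i.castSucc j.castSucc ((Fin.castSucc_injective m).ne hij)
          (Submodule.Quotient.mk (u i)))
      have e1 : (Submodule.Quotient.mk (xSv k (m + 1) S (Fin.last m) • y) :
          M j.castSucc ⧸ xIdeal k (m + 1) S i.castSucc •
            (⊤ : Submodule S (M j.castSucc))) =
          Submodule.Quotient.mk (xSv k (m + 1) S (Fin.last m) • u j) := by
        rw [Submodule.Quotient.mk_smul, Submodule.Quotient.mk_smul, hy, ← map_smul,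
          ← Submodule.Quotient.mk_smul, ← hu i, ← Submodule.Quotient.mk_smul, ← hu j]
        exact hzmem i j hij
      have e2 : xSv k (m + 1) S (Fin.last m) • (y - u j) ∈
          xIdeal k (m + 1) S i.castSucc • (⊤ : Submodule S (M j.castSucc)) := by
        rw [smul_sub]
        exact (Submodule.Quotient.eq _).1 e1
      have e3 : y - u j ∈
          xIdeal k (m + 1) S i.castSucc • (⊤ : Submodule S (M j.castSucc)) := by
        have hb := (bridge_smul_top (xIdeal k (m + 1) S j.castSucc)
          (xIdeal k (m + 1) S i.castSucc)).1 e2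
        have hb2 : (Ideal.Quotient.mk (xIdeal k (m + 1) S j.castSucc)
            (xSv k (m + 1) S (Fin.last m))) • (y - u j) ∈
            ((xIdeal k (m + 1) S i.castSucc).map
              (Ideal.Quotient.mk (xIdeal k (m + 1) S j.castSucc))) •
              (⊤ : Submodule (S ⧸ xIdeal k (m + 1) S j.castSucc) (M j.castSucc)) := by
          rwa [← Ideal.Quotient.algebraMap_eq, algebraMap_smul]
        have hchyp : ∀ σ : S ⧸ xIdeal k (m + 1) S j.castSucc,
            σ * (Ideal.Quotient.mk (xIdeal k (m + 1) S j.castSucc)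
              (xSv k (m + 1) S (Fin.last m))) ∈
              ((xIdeal k (m + 1) S i.castSucc).map
                (Ideal.Quotient.mk (xIdeal k (m + 1) S j.castSucc))) →
            σ ∈ ((xIdeal k (m + 1) S i.castSucc).map
                (Ideal.Quotient.mk (xIdeal k (m + 1) S j.castSucc))) := by
          intro σ hσ
          have h4 := Q_colon_hyp k m S i i j σ (by rwa [sup_idem])
          rwa [sup_idem] at h4
        have hcol := P_colon (B := S ⧸ xIdeal k (m + 1) S j.castSucc)
          (P := M j.castSucc) _ _ hchyp hb2
        exact (bridge_smul_top _ _).2 hcol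
      rw [← hy]
      exact (Submodule.Quotient.eq _).2 e3
    have hzez : z = xSv k (m + 1) S (Fin.last m) • (⟨u, humem⟩ : fiberProdFirst k m S M φ) := by
      apply Subtype.ext
      funext i
      exact hu i
    rw [hzez]
    exact Submodule.smul_mem_smul (Ideal.mem_span_singleton_self _) Submodule.mem_top
  · refine Submodule.smul_le.2 (fun r hr z _ => ?_)
    rw [LinearMap.mem_ker]
    have hcz : ∀ i : Fin m, rhoMap k m S M φ (r • z) i = 0 := by
      intro i
      rw [rhoMap_apply]
      have hco : ((r • z : fiberProdFirst k m S M φ) : ∀ i : Fin m, M i.castSucc) i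
          = r • ((z : ∀ i : Fin m, M i.castSucc) i) := rfl
      rw [hco, Submodule.Quotient.mk_smul, smul_quot_top_eq_zero (le_refl _) hr, map_zero]
    funext i
    exact hcz i

end Hier3
lemma qfactor_mk {S : Type*} [CommRing S] {M : Type*} [AddCommGroup M] [Module S M]
    {p q : Submodule S M} (h : p ≤ q) (x : M) :
    qfactor h (Submodule.Quotient.mk x) = Submodule.Quotient.mk x := by
  rw [qfactor, Submodule.mapQ_apply]
  rfl

section Hier4

variable (k : Type) [Field k] (m : ℕ) (S : Type) [CommRing S]
  [Algebra (SNCModel k (m + 1)) S] [Module.Flat (SNCModel k (m + 1)) S]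

/-- Transfer of the gluing property to tuples in a quotient ring `S/I_t`. -/
lemma glue_transfer (t : Fin (m + 1)) (T₀ : Finset (Fin m))
    (ht : ∀ i ∈ T₀, i.castSucc ≠ t)
    (fσ : Fin m → S ⧸ xIdeal k (m + 1) S t)
    (hdiff : ∀ i ∈ T₀, ∀ j ∈ T₀, fσ i - fσ j ∈
      (xIdeal k (m + 1) S i.castSucc ⊔ xIdeal k (m + 1) S j.castSucc).map
        (Ideal.Quotient.mk (xIdeal k (m + 1) S t))) :
    ∃ gσ : S ⧸ xIdeal k (m + 1) S t, ∀ i ∈ T₀, gσ - fσ i ∈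
      (xIdeal k (m + 1) S i.castSucc).map (Ideal.Quotient.mk (xIdeal k (m + 1) S t)) := by
  classical
  choose ss hss using fun i => Ideal.Quotient.mk_surjective (fσ i)
  set TS : Finset (Fin (m + 1)) := T₀.image Fin.castSucc with hTS
  have hdisj : Disjoint TS ({t} : Finset (Fin (m + 1))) := by
    rw [Finset.disjoint_singleton_right, hTS, Finset.mem_image]
    rintro ⟨i, hi, hit⟩
    exact ht i hi hit
  set fS : Fin (m + 1) → S := Fin.lastCases
    (Fin.lastCases 0 ss (Fin.last m)) (fun i => ss i) with hfS
  have hfS_cs : ∀ i : Fin m, fS i.castSucc = ss i := by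
    intro i
    exact Fin.lastCases_castSucc i
  have hglue : ∀ a ∈ TS, ∀ b ∈ TS, fS a - fS b ∈
      IS k (m + 1) S {a} ⊔ IS k (m + 1) S {b} ⊔ IS k (m + 1) S {t} := by
    intro a ha b hb
    obtain ⟨i, hi, rfl⟩ := Finset.mem_image.1 ha
    obtain ⟨j, hj, rfl⟩ := Finset.mem_image.1 hb
    rw [hfS_cs, hfS_cs]
    have h1 : (Ideal.Quotient.mk (xIdeal k (m + 1) S t)) (ss i - ss j) ∈
        (xIdeal k (m + 1) S i.castSucc ⊔ xIdeal k (m + 1) S j.castSucc).map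
          (Ideal.Quotient.mk (xIdeal k (m + 1) S t)) := by
      rw [map_sub, hss, hss]
      exact hdiff i hi j hj
    rw [Ideal.mem_quotient_iff_mem_sup] at h1
    rwa [xIdeal_eq_IS, xIdeal_eq_IS, xIdeal_eq_IS] at h1
  obtain ⟨g, hg⟩ := S_glue k (m + 1) S hdisj hglue
  refine ⟨Ideal.Quotient.mk _ g, fun i hi => ?_⟩
  have h2 := hg i.castSucc (Finset.mem_image.2 ⟨i, hi, rfl⟩)
  rw [hfS_cs] at h2
  obtain ⟨z1, hz1, z2, hz2, hzz⟩ := Submodule.mem_sup.1 h2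
  have h3 : (Ideal.Quotient.mk (xIdeal k (m + 1) S t)) g - fσ i
      = (Ideal.Quotient.mk (xIdeal k (m + 1) S t)) z1 := by
    rw [← hss i, ← map_sub, ← hzz, map_add]
    have : (Ideal.Quotient.mk (xIdeal k (m + 1) S t)) z2 = 0 := by
      rw [Ideal.Quotient.eq_zero_iff_mem]
      rwa [xIdeal_eq_IS]
    rw [this, add_zero]
  rw [h3]
  exact Ideal.mem_map_of_mem _ (by rw [xIdeal_eq_IS]; exact hz1)

variable (M : Fin (m + 1) → Type) [∀ i, AddCommGroup (M i)] [∀ i, Module S (M i)]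
  [∀ i, Module (S ⧸ xIdeal k (m + 1) S i) (M i)]
  [∀ i, IsScalarTower S (S ⧸ xIdeal k (m + 1) S i) (M i)]
  [∀ i, Module.Finite (S ⧸ xIdeal k (m + 1) S i) (M i)]
  [∀ i, Module.Projective (S ⧸ xIdeal k (m + 1) S i) (M i)]
variable (φ : ∀ i j : Fin (m + 1), i ≠ j →
  ((M i ⧸ xIdeal k (m + 1) S j • (⊤ : Submodule S (M i))) ≃ₗ[S]
    (M j ⧸ xIdeal k (m + 1) S i • (⊤ : Submodule S (M j)))))

lemma range_rho_le_range_delta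
    (hcoc : ∀ (i j l : Fin (m + 1)) (hij : i ≠ j) (hjl : j ≠ l) (hil : i ≠ l)
      (x : M i) (y : M j),
      φ i j hij (Submodule.Quotient.mk x) = Submodule.Quotient.mk y →
      qfactor (Submodule.smul_mono_left
          (le_sup_left : xIdeal k (m + 1) S i ≤ xIdeal k (m + 1) S i ⊔ xIdeal k (m + 1) S j))
          (φ i l hil (Submodule.Quotient.mk x)) =
        qfactor (Submodule.smul_mono_left
          (le_sup_right : xIdeal k (m + 1) S j ≤ xIdeal k (m + 1) S i ⊔ xIdeal k (m + 1) S j))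
          (φ j l hjl (Submodule.Quotient.mk y))) :
    LinearMap.range (rhoMap k m S M φ) ≤ LinearMap.range (deltaMap k m S M) := by
  rintro - ⟨z, rfl⟩
  have hzmem := (mem_fiberProdFirst k m S M φ _).1 z.2
  -- choose lifts u i of φ_{i,ℓ}(z i)
  have hch : ∀ i : Fin m, ∃ u : M (Fin.last m),
      (Submodule.Quotient.mk u : M (Fin.last m) ⧸
        xIdeal k (m + 1) S i.castSucc • (⊤ : Submodule S (M (Fin.last m)))) =
      φ i.castSucc (Fin.last m) (castSucc_ne_last m i)
        (Submodule.Quotient.mk ((z : ∀ i : Fin m, M i.castSucc) i)) :=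
    fun i => Submodule.Quotient.mk_surjective _ _
  choose u hu using hch
  -- pairwise compatibility of the u i
  have hucompat : ∀ i j : Fin m, i ≠ j → u i - u j ∈
      (xIdeal k (m + 1) S i.castSucc ⊔ xIdeal k (m + 1) S j.castSucc) •
        (⊤ : Submodule S (M (Fin.last m))) := by
    intro i j hij
    have h1 := hcoc i.castSucc j.castSucc (Fin.last m)
      ((Fin.castSucc_injective m).ne hij) (castSucc_ne_last m j) (castSucc_ne_last m i)
      ((z : ∀ i : Fin m, M i.castSucc) i) ((z : ∀ i : Fin m, M i.castSucc) j)
      (hzmem i j hij)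
    rw [← hu i, ← hu j, qfactor_mk, qfactor_mk] at h1
    exact (Submodule.Quotient.eq _).1 h1
  -- glue the u i using P_glue over S/I_last
  have hPg := P_glue (B := S ⧸ xIdeal k (m + 1) S (Fin.last m)) (P := M (Fin.last m))
    (Finset.univ : Finset (Fin m))
    (fun i => (xIdeal k (m + 1) S i.castSucc).map
      (Ideal.Quotient.mk (xIdeal k (m + 1) S (Fin.last m))))
    (fun fσ hfσ => glue_transfer k m S (Fin.last m) Finset.univ
      (fun i _ => castSucc_ne_last m i) fσ (fun i hi j hj => by
        have := hfσ i hi j hj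
        rwa [← Ideal.map_sup] at this)) u
    (fun i _ j _ => by
      rcases eq_or_ne i j with rfl | hij
      · simp
      · have := (bridge_smul_top (xIdeal k (m + 1) S (Fin.last m)) _).1 (hucompat i j hij)
        rwa [Ideal.map_sup] at this)
  obtain ⟨w, hw⟩ := hPg
  refine ⟨w, ?_⟩
  funext i
  rw [deltaMap_apply, rhoMap_apply, ← hu i]
  have h5 := (bridge_smul_top (xIdeal k (m + 1) S (Fin.last m)) _).2 (hw i (Finset.mem_univ i))
  exact (Submodule.Quotient.eq _).2 h5

end Hier4
section Hier5

variable (k : Type) [Field k] (m : ℕ) (S : Type) [CommRing S]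
  [Algebra (SNCModel k (m + 1)) S] [Module.Flat (SNCModel k (m + 1)) S]
variable (M : Fin (m + 1) → Type) [∀ i, AddCommGroup (M i)] [∀ i, Module S (M i)]
  [∀ i, Module (S ⧸ xIdeal k (m + 1) S i) (M i)]
  [∀ i, IsScalarTower S (S ⧸ xIdeal k (m + 1) S i) (M i)]
  [∀ i, Module.Finite (S ⧸ xIdeal k (m + 1) S i) (M i)]
  [∀ i, Module.Projective (S ⧸ xIdeal k (m + 1) S i) (M i)]
variable (φ : ∀ i j : Fin (m + 1), i ≠ j →
  ((M i ⧸ xIdeal k (m + 1) S j • (⊤ : Submodule S (M i))) ≃ₗ[S]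
    (M j ⧸ xIdeal k (m + 1) S i • (⊤ : Submodule S (M j)))))

lemma lift_exists
    (hsymm : ∀ (i j : Fin (m + 1)) (h : i ≠ j), φ j i h.symm = (φ i j h).symm)
    (hcoc : ∀ (i j l : Fin (m + 1)) (hij : i ≠ j) (hjl : j ≠ l) (hil : i ≠ l)
      (x : M i) (y : M j),
      φ i j hij (Submodule.Quotient.mk x) = Submodule.Quotient.mk y →
      qfactor (Submodule.smul_mono_left
          (le_sup_left : xIdeal k (m + 1) S i ≤ xIdeal k (m + 1) S i ⊔ xIdeal k (m + 1) S j))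
          (φ i l hil (Submodule.Quotient.mk x)) =
        qfactor (Submodule.smul_mono_left
          (le_sup_right : xIdeal k (m + 1) S j ≤ xIdeal k (m + 1) S i ⊔ xIdeal k (m + 1) S j))
          (φ j l hjl (Submodule.Quotient.mk y)))
    (w : M (Fin.last m)) (r : ℕ) (hr : r ≤ m) :
    ∃ mm : ∀ i : Fin m, M i.castSucc,
      (∀ (i j : Fin m) (hij : i ≠ j), i.val < r → j.val < r →
        φ i.castSucc j.castSucc ((Fin.castSucc_injective m).ne hij)
          (Submodule.Quotient.mk (mm i)) = Submodule.Quotient.mk (mm j)) ∧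
      (∀ i : Fin m, i.val < r →
        (Submodule.Quotient.mk (mm i) : M i.castSucc ⧸ xIdeal k (m + 1) S (Fin.last m) •
          (⊤ : Submodule S (M i.castSucc))) =
        φ (Fin.last m) i.castSucc (castSucc_ne_last m i).symm (Submodule.Quotient.mk w)) := by
  classical
  induction r with
  | zero =>
      exact ⟨fun i => 0, fun i j hij hi => absurd hi (Nat.not_lt_zero _),
        fun i hi => absurd hi (Nat.not_lt_zero _)⟩
  | succ r ih =>
      obtain ⟨mm, hcompat, hwcond⟩ := ih (Nat.le_of_succ_le hr)
      have hrm : r < m := hr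
      set rr : Fin m := ⟨r, hrm⟩ with hrr
      set x := xSv k (m + 1) S (Fin.last m) with hx
      have hnerr : ∀ i : Fin m, i.val < r → i.castSucc ≠ rr.castSucc := by
        intro i hi
        exact (Fin.castSucc_injective m).ne (Fin.ne_of_val_ne (Nat.ne_of_lt hi))
      obtain ⟨t0, ht0⟩ := Submodule.Quotient.mk_surjective _
        (φ (Fin.last m) rr.castSucc (castSucc_ne_last m rr).symm (Submodule.Quotient.mk w))
      have hil : ∀ i : Fin m, i.val < r →
          φ i.castSucc (Fin.last m) (castSucc_ne_last m i) (Submodule.Quotient.mk (mm i))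
            = Submodule.Quotient.mk w := by
        intro i hi
        rw [hsymm (Fin.last m) i.castSucc (castSucc_ne_last m i).symm, hwcond i hi,
          LinearEquiv.symm_apply_apply]
      have hgex : ∀ (i : Fin m) (hi : i.val < r), ∃ gi : M rr.castSucc,
          (Submodule.Quotient.mk gi : M rr.castSucc ⧸ xIdeal k (m + 1) S i.castSucc •
            (⊤ : Submodule S (M rr.castSucc))) =
          φ i.castSucc rr.castSucc (hnerr i hi) (Submodule.Quotient.mk (mm i)) :=
        fun i hi => Submodule.Quotient.mk_surjective _ _
      choose g hg using hgex
      have haex : ∀ (i : Fin m) (hi : i.val < r), ∃ bi : M rr.castSucc,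
          g i hi - t0 - x • bi ∈ xIdeal k (m + 1) S i.castSucc •
            (⊤ : Submodule S (M rr.castSucc)) := by
        intro i hi
        have h1 := hcoc i.castSucc (Fin.last m) rr.castSucc (castSucc_ne_last m i)
          (castSucc_ne_last m rr).symm (hnerr i hi) (mm i) w (hil i hi)
        rw [← hg i hi, ← ht0, qfactor_mk, qfactor_mk] at h1
        have h2 := (Submodule.Quotient.eq _).1 h1
        rw [Submodule.sup_smul] at h2
        obtain ⟨a, ha, b', hb', hab⟩ := Submodule.mem_sup.1 h2
        obtain ⟨bi, hbi⟩ := mem_span_singleton_smul_top_iff.1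
          (show b' ∈ Ideal.span {x} • (⊤ : Submodule S (M rr.castSucc)) from hb')
        refine ⟨bi, ?_⟩
        have e : g i hi - t0 - x • bi = a := by rw [← hab, hbi]; abel
        rw [e]; exact ha
      choose b hb using haex
      have hbcompat : ∀ (i j : Fin m) (hi : i.val < r) (hj : j.val < r), i ≠ j →
          b i hi - b j hj ∈ (xIdeal k (m + 1) S i.castSucc ⊔ xIdeal k (m + 1) S j.castSucc) •
            (⊤ : Submodule S (M rr.castSucc)) := by
        intro i j hi hj hij
        have h1 := hcoc i.castSucc j.castSucc rr.castSucc ((Fin.castSucc_injective m).ne hij)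
          (hnerr j hj) (hnerr i hi) (mm i) (mm j) (hcompat i j hij hi hj)
        rw [← hg i hi, ← hg j hj, qfactor_mk, qfactor_mk] at h1
        have h2 := (Submodule.Quotient.eq _).1 h1
        have h3 : x • (b i hi - b j hj) ∈
            (xIdeal k (m + 1) S i.castSucc ⊔ xIdeal k (m + 1) S j.castSucc) •
              (⊤ : Submodule S (M rr.castSucc)) := by
          have e : x • (b i hi - b j hj) = (g i hi - g j hj)
              - (g i hi - t0 - x • b i hi) + (g j hj - t0 - x • b j hj) := by
            rw [smul_sub]; abel
          rw [e]
          refine Submodule.add_mem _ (Submodule.sub_mem _ h2 ?_) ?_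
          · exact Submodule.smul_mono_left le_sup_left (hb i hi)
          · exact Submodule.smul_mono_left le_sup_right (hb j hj)
        have hb2 : (Ideal.Quotient.mk (xIdeal k (m + 1) S rr.castSucc) x) • (b i hi - b j hj) ∈
            ((xIdeal k (m + 1) S i.castSucc ⊔ xIdeal k (m + 1) S j.castSucc).map
              (Ideal.Quotient.mk (xIdeal k (m + 1) S rr.castSucc))) •
              (⊤ : Submodule (S ⧸ xIdeal k (m + 1) S rr.castSucc) (M rr.castSucc)) := by
          rw [← Ideal.Quotient.algebraMap_eq, algebraMap_smul]
          exact (bridge_smul_top _ _).1 h3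
        have hcol := P_colon (B := S ⧸ xIdeal k (m + 1) S rr.castSucc)
          (P := M rr.castSucc) _ _ (fun σ hσ => Q_colon_hyp k m S i j rr σ hσ) hb2
        exact (bridge_smul_top _ _).2 hcol
      set T : Finset (Fin m) := Finset.univ.filter (fun i : Fin m => i.val < r) with hTdef
      have hmemT : ∀ i : Fin m, i ∈ T ↔ i.val < r := by
        intro i; rw [hTdef, Finset.mem_filter]; simp
      set v : Fin m → M rr.castSucc := fun i => if hi : i.val < r then b i hi else 0 with hvdef
      have hPg := P_glue (B := S ⧸ xIdeal k (m + 1) S rr.castSucc) (P := M rr.castSucc) T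
        (fun i => (xIdeal k (m + 1) S i.castSucc).map
          (Ideal.Quotient.mk (xIdeal k (m + 1) S rr.castSucc)))
        (fun fσ hfσ => glue_transfer k m S rr.castSucc T
          (fun i hiT => hnerr i ((hmemT i).1 hiT)) fσ (fun i hi j hj => by
            have := hfσ i hi j hj
            rwa [← Ideal.map_sup] at this)) v
        (fun i hiT j hjT => by
          rcases eq_or_ne i j with rfl | hij
          · simp
          · have h4 := (bridge_smul_top (xIdeal k (m + 1) S rr.castSucc) _).1
              (hbcompat i j ((hmemT i).1 hiT) ((hmemT j).1 hjT) hij)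
            rw [Ideal.map_sup] at h4
            have hvi : v i = b i ((hmemT i).1 hiT) := dif_pos _
            have hvj : v j = b j ((hmemT j).1 hjT) := dif_pos _
            rw [hvi, hvj]
            exact h4)
      obtain ⟨wb, hwb⟩ := hPg
      have hwb' : ∀ (i : Fin m) (hi : i.val < r), wb - b i hi ∈
          xIdeal k (m + 1) S i.castSucc • (⊤ : Submodule S (M rr.castSucc)) := by
        intro i hi
        have h5 := hwb i ((hmemT i).2 hi)
        have hvi : v i = b i hi := dif_pos _
        rw [hvi] at h5
        exact (bridge_smul_top _ _).2 h5
      -- the key identity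
      have key : ∀ (j : Fin m) (hj : j.val < r),
          φ j.castSucc rr.castSucc (hnerr j hj) (Submodule.Quotient.mk (mm j))
            = Submodule.Quotient.mk (t0 + x • wb) := by
        intro j hj
        rw [← hg j hj]
        refine (Submodule.Quotient.eq _).2 ?_
        have e : g j hj - (t0 + x • wb)
            = (g j hj - t0 - x • b j hj) - x • (wb - b j hj) := by
          rw [smul_sub]; abel
        rw [e]
        exact Submodule.sub_mem _ (hb j hj) (Submodule.smul_mem _ x (hwb' j hj))
      refine ⟨Function.update mm rr (t0 + x • wb), ?_, ?_⟩
      · intro i j hij hi hj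
        by_cases hirr : i = rr
        · subst hirr
          have hjrr : j ≠ rr := hij.symm
          have hjr : j.val < r := by
            rcases Nat.lt_succ_iff_lt_or_eq.1 hj with h | h
            · exact h
            · exact absurd (Fin.ext h) hjrr
          rw [Function.update_self, Function.update_of_ne hjrr]
          rw [hsymm j.castSucc rr.castSucc ((Fin.castSucc_injective m).ne hjrr)]
          rw [LinearEquiv.symm_apply_eq]
          exact (key j hjr).symm
        · have hir : i.val < r := by
            rcases Nat.lt_succ_iff_lt_or_eq.1 hi with h | h
            · exact h
            · exact absurd (Fin.ext h) hirr
          by_cases hjrr : j = rr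
          · subst hjrr
            rw [Function.update_self, Function.update_of_ne hirr]
            exact key i hir
          · have hjr : j.val < r := by
              rcases Nat.lt_succ_iff_lt_or_eq.1 hj with h | h
              · exact h
              · exact absurd (Fin.ext h) hjrr
            rw [Function.update_of_ne hirr, Function.update_of_ne hjrr]
            exact hcompat i j hij hir hjr
      · intro i hi
        by_cases hirr : i = rr
        · subst hirr
          rw [Function.update_self]
          have e : (Submodule.Quotient.mk (t0 + x • wb) :
              M rr.castSucc ⧸ xIdeal k (m + 1) S (Fin.last m) •
                (⊤ : Submodule S (M rr.castSucc))) = Submodule.Quotient.mk t0 := by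
            refine (Submodule.Quotient.eq _).2 ?_
            have e2 : t0 + x • wb - t0 = x • wb := by abel
            rw [e2]
            exact Submodule.smul_mem_smul (Ideal.mem_span_singleton_self _) Submodule.mem_top
          rw [e, ht0]
        · have hir : i.val < r := by
            rcases Nat.lt_succ_iff_lt_or_eq.1 hi with h | h
            · exact h
            · exact absurd (Fin.ext h) hirr
          rw [Function.update_of_ne hirr]
          exact hwcond i hir

lemma range_delta_le_range_rho
    (hsymm : ∀ (i j : Fin (m + 1)) (h : i ≠ j), φ j i h.symm = (φ i j h).symm)
    (hcoc : ∀ (i j l : Fin (m + 1)) (hij : i ≠ j) (hjl : j ≠ l) (hil : i ≠ l)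
      (x : M i) (y : M j),
      φ i j hij (Submodule.Quotient.mk x) = Submodule.Quotient.mk y →
      qfactor (Submodule.smul_mono_left
          (le_sup_left : xIdeal k (m + 1) S i ≤ xIdeal k (m + 1) S i ⊔ xIdeal k (m + 1) S j))
          (φ i l hil (Submodule.Quotient.mk x)) =
        qfactor (Submodule.smul_mono_left
          (le_sup_right : xIdeal k (m + 1) S j ≤ xIdeal k (m + 1) S i ⊔ xIdeal k (m + 1) S j))
          (φ j l hjl (Submodule.Quotient.mk y))) :
    LinearMap.range (deltaMap k m S M) ≤ LinearMap.range (rhoMap k m S M φ) := by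
  rintro - ⟨w, rfl⟩
  obtain ⟨mm, hcompat, hwcond⟩ := lift_exists k m S M φ hsymm hcoc w m le_rfl
  have hmem : mm ∈ fiberProdFirst k m S M φ :=
    (mem_fiberProdFirst k m S M φ mm).2 (fun i j h => hcompat i j h i.isLt j.isLt)
  refine ⟨⟨mm, hmem⟩, ?_⟩
  funext i
  rw [rhoMap_apply, deltaMap_apply]
  show φ i.castSucc (Fin.last m) (castSucc_ne_last m i) (Submodule.Quotient.mk (mm i))
    = Submodule.Quotient.mk w
  rw [hsymm (Fin.last m) i.castSucc (castSucc_ne_last m i).symm, hwcond i i.isLt,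
    LinearEquiv.symm_apply_apply]

end Hier5
section Hier6

variable (k : Type) [Field k] (m : ℕ) (S : Type) [CommRing S]
  [Algebra (SNCModel k (m + 1)) S] [Module.Flat (SNCModel k (m + 1)) S]

lemma IS_empty : IS k (m + 1) S ∅ = ⊥ := by simp [IS]

lemma factorAlgHom_mk {I J : Ideal S} (h : I ≤ J) (s : S) :
    factorAlgHom I J h (Ideal.Quotient.mk I s) = Ideal.Quotient.mk J s :=
  Ideal.Quotient.factor_mk h s

lemma mem_compatAlg_iff (σ : ∀ i : Fin m, S ⧸ xIdeal k (m + 1) S i.castSucc) :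
    σ ∈ compatAlg k (m + 1) S (Fin.castSucc : Fin m → Fin (m + 1)) ↔
      ∀ (i j : Fin m), i ≠ j →
        factorAlgHom (xIdeal k (m + 1) S i.castSucc)
          (xIdeal k (m + 1) S i.castSucc ⊔ xIdeal k (m + 1) S j.castSucc) le_sup_left (σ i) =
        factorAlgHom (xIdeal k (m + 1) S j.castSucc)
          (xIdeal k (m + 1) S i.castSucc ⊔ xIdeal k (m + 1) S j.castSucc) le_sup_right (σ j) := by
  simp only [compatAlg, Algebra.mem_iInf, AlgHom.mem_equalizer, AlgHom.coe_comp,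
    Function.comp_apply, Pi.evalAlgHom_apply]

/-- `algebraMap S F` is surjective with kernel `(piX)`. -/
lemma algebraMap_compatAlg_apply (s : S) (i : Fin m) :
    ((algebraMap S (compatAlg k (m + 1) S (Fin.castSucc : Fin m → Fin (m + 1))) s :
      ∀ i : Fin m, S ⧸ xIdeal k (m + 1) S i.castSucc) i) =
      Ideal.Quotient.mk (xIdeal k (m + 1) S i.castSucc) s := rfl

lemma ker_algebraMap_compatAlg (s : S)
    (hs : algebraMap S (compatAlg k (m + 1) S (Fin.castSucc : Fin m → Fin (m + 1))) s = 0) :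
    s ∈ Ideal.span {piX k m S} := by
  have h1 : ∀ i : Fin m, Ideal.Quotient.mk (xIdeal k (m + 1) S i.castSucc) s = 0 := by
    intro i
    have hv := congrArg Subtype.val hs
    have hvi := congrFun hv i
    simpa using hvi
  have h2 : ∀ j ∈ TcS m, s ∈ IS k (m + 1) S {j} ⊔ IS k (m + 1) S ∅ := by
    intro j hj
    obtain ⟨i, rfl⟩ := (mem_TcS m).1 hj
    rw [IS_empty, sup_bot_eq, ← xIdeal_eq_IS]
    exact Ideal.Quotient.eq_zero_iff_mem.1 (h1 i)
  have h3 := S_inter k (m + 1) S (by simp : Disjoint (TcS m) (∅ : Finset (Fin (m + 1)))) h2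
  rw [IS_empty, sup_bot_eq, piS_TcS] at h3
  exact h3

lemma surj_algebraMap_compatAlg :
    Function.Surjective
      (algebraMap S (compatAlg k (m + 1) S (Fin.castSucc : Fin m → Fin (m + 1)))) := by
  classical
  rintro ⟨σ, hσ⟩
  rw [mem_compatAlg_iff] at hσ
  choose ss hss using fun i => Ideal.Quotient.mk_surjective (σ i)
  set fS : Fin (m + 1) → S := Fin.lastCases 0 ss with hfS
  have hfS_cs : ∀ i : Fin m, fS i.castSucc = ss i := fun i => Fin.lastCases_castSucc i
  have hglue : ∀ a ∈ TcS m, ∀ b ∈ TcS m, fS a - fS b ∈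
      IS k (m + 1) S {a} ⊔ IS k (m + 1) S {b} ⊔ IS k (m + 1) S ∅ := by
    intro a ha b hb
    obtain ⟨i, rfl⟩ := (mem_TcS m).1 ha
    obtain ⟨j, rfl⟩ := (mem_TcS m).1 hb
    rw [IS_empty, sup_bot_eq, hfS_cs, hfS_cs, ← xIdeal_eq_IS, ← xIdeal_eq_IS]
    rcases eq_or_ne i j with rfl | hij
    · simp
    · have h1 := hσ i j hij
      rw [← hss i, ← hss j, factorAlgHom_mk, factorAlgHom_mk,
        Ideal.Quotient.mk_eq_mk_iff_sub_mem] at h1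
      exact h1
  obtain ⟨g, hg⟩ := S_glue k (m + 1) S
    (by simp : Disjoint (TcS m) (∅ : Finset (Fin (m + 1)))) hglue
  refine ⟨g, ?_⟩
  apply Subtype.ext
  funext i
  have h2 := hg i.castSucc ((mem_TcS m).2 ⟨i, rfl⟩)
  rw [IS_empty, sup_bot_eq, hfS_cs, ← xIdeal_eq_IS] at h2
  show Ideal.Quotient.mk (xIdeal k (m + 1) S i.castSucc) g = σ i
  rw [← hss i, Ideal.Quotient.mk_eq_mk_iff_sub_mem]
  exact h2

/-- The compatible-tuple algebra is the quotient of `S` by the product of the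
first `m` variables. -/
noncomputable def compatAlgEquiv :
    (S ⧸ Ideal.span {piX k m S}) ≃ₗ[S]
      compatAlg k (m + 1) S (Fin.castSucc : Fin m → Fin (m + 1)) := by
  have hle : Ideal.span {piX k m S} ≤ LinearMap.ker
      (Algebra.linearMap S (compatAlg k (m + 1) S (Fin.castSucc : Fin m → Fin (m + 1)))) := by
    rw [Ideal.span_le, Set.singleton_subset_iff, SetLike.mem_coe, LinearMap.mem_ker]
    apply Subtype.ext
    funext i
    show Ideal.Quotient.mk (xIdeal k (m + 1) S i.castSucc) (piX k m S) = 0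
    rw [Ideal.Quotient.eq_zero_iff_mem]
    exact piX_mem k m S i
  refine LinearEquiv.ofBijective (Submodule.liftQ _ (Algebra.linearMap S _) hle) ⟨?_, ?_⟩
  · rw [← LinearMap.ker_eq_bot]
    apply Submodule.ker_liftQ_eq_bot
    intro s hsk
    rw [LinearMap.mem_ker] at hsk
    exact ker_algebraMap_compatAlg k m S s hsk
  · intro y
    obtain ⟨s, hs⟩ := surj_algebraMap_compatAlg k m S y
    exact ⟨Submodule.Quotient.mk s, hs⟩

end Hier6
/-- there is an `S`-linear isomorphism `Mₙ ⊗_S F ≅ M'/(IₙM')`, where `F` is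
the ring of compatible tuples in `∏_{i<n} Sᵢ` and `M'` is the fiber product module of the
first `n-1` pieces of the descent data. -/
theorem statement7 (k : Type) [Field k] (m : ℕ) (hm : 1 ≤ m)
    (S : Type) [CommRing S] [Algebra (SNCModel k (m + 1)) S]
    [Module.Flat (SNCModel k (m + 1)) S]
    (M : Fin (m + 1) → Type) [∀ i, AddCommGroup (M i)] [∀ i, Module S (M i)]
    [∀ i, Module (S ⧸ xIdeal k (m + 1) S i) (M i)]
    [∀ i, IsScalarTower S (S ⧸ xIdeal k (m + 1) S i) (M i)]
    [∀ i, Module.Finite (S ⧸ xIdeal k (m + 1) S i) (M i)]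
    [∀ i, Module.Projective (S ⧸ xIdeal k (m + 1) S i) (M i)]
    (φ : ∀ i j : Fin (m + 1), i ≠ j →
      ((M i ⧸ xIdeal k (m + 1) S j • (⊤ : Submodule S (M i))) ≃ₗ[S]
        (M j ⧸ xIdeal k (m + 1) S i • (⊤ : Submodule S (M j)))))
    (hsymm : ∀ (i j : Fin (m + 1)) (h : i ≠ j), φ j i h.symm = (φ i j h).symm)
    (hcoc : ∀ (i j l : Fin (m + 1)) (hij : i ≠ j) (hjl : j ≠ l) (hil : i ≠ l)
      (x : M i) (y : M j),
      φ i j hij (Submodule.Quotient.mk x) = Submodule.Quotient.mk y →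
      qfactor (Submodule.smul_mono_left
          (le_sup_left : xIdeal k (m + 1) S i ≤ xIdeal k (m + 1) S i ⊔ xIdeal k (m + 1) S j))
          (φ i l hil (Submodule.Quotient.mk x)) =
        qfactor (Submodule.smul_mono_left
          (le_sup_right : xIdeal k (m + 1) S j ≤ xIdeal k (m + 1) S i ⊔ xIdeal k (m + 1) S j))
          (φ j l hjl (Submodule.Quotient.mk y))) :
    Nonempty
      ((M (Fin.last m) ⊗[S]
          (compatAlg k (m + 1) S (Fin.castSucc : Fin m → Fin (m + 1)))) ≃ₗ[S]
        (fiberProdFirst k m S M φ ⧸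
          xIdeal k (m + 1) S (Fin.last m) •
            (⊤ : Submodule S (fiberProdFirst k m S M φ)))) := by
  refine ⟨?_⟩
  have e1 : (M (Fin.last m) ⊗[S]
        (compatAlg k (m + 1) S (Fin.castSucc : Fin m → Fin (m + 1)))) ≃ₗ[S]
      (M (Fin.last m) ⧸ Ideal.span {piX k m S} •
        (⊤ : Submodule S (M (Fin.last m)))) :=
    (TensorProduct.congr (LinearEquiv.refl S (M (Fin.last m)))
      (compatAlgEquiv k m S).symm).trans
      (tensorQuotEquivQuotSMul (M (Fin.last m)) (Ideal.span {piX k m S}))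
  have e2 : (M (Fin.last m) ⧸ Ideal.span {piX k m S} •
        (⊤ : Submodule S (M (Fin.last m)))) ≃ₗ[S]
      (M (Fin.last m) ⧸ LinearMap.ker (deltaMap k m S M)) :=
    Submodule.quotEquivOfEq _ _ (ker_deltaMap k m S M).symm
  have e3 := (deltaMap k m S M).quotKerEquivRange
  have e4 : (LinearMap.range (deltaMap k m S M) : Submodule S _) ≃ₗ[S]
      LinearMap.range (rhoMap k m S M φ) :=
    LinearEquiv.ofEq _ _ (le_antisymm
      (range_delta_le_range_rho k m S M φ hsymm hcoc)
      (range_rho_le_range_delta k m S M φ hcoc))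
  have e5 := (rhoMap k m S M φ).quotKerEquivRange.symm
  have e6 : (fiberProdFirst k m S M φ ⧸ LinearMap.ker (rhoMap k m S M φ)) ≃ₗ[S]
      (fiberProdFirst k m S M φ ⧸
        xIdeal k (m + 1) S (Fin.last m) •
          (⊤ : Submodule S (fiberProdFirst k m S M φ))) :=
    Submodule.quotEquivOfEq _ _ (ker_rhoMap k m S M φ hsymm)
  exact e1.trans (e2.trans (e3.trans (e4.trans (e5.trans e6))))
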